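/- Let K be a field with a valuation and q ∈ K a topologically nilpotent nonzero element. Then for every p ∈ K with p ≠ 0, the closure of the orbit {qⁿ·p : n ∈ ℤ} in the projective line P¹(K) = K ∪ {∞} is the orbit together with the two points 0 and ∞, and this closure is compact. -/

import Mathlib

/-- Topological nilpotence in a linearly ordered commutative group with zero. -/
def IsTopNilpotent {Γ₀ : Type*} [LinearOrderedCommGroupWithZero Γ₀] (ρ : Γ₀) : Prop :=
  ∀ ε : Γ₀, ε ≠ 0 → ∃ n₀ : ℕ, ∀ n ≥ n₀, ρ ^ n ≤ ε

/-- The topology on `P¹(K) = K ∪ {∞}` generated by the closed balls and the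
complements of open balls (together with `∞`). -/
def pTop {K Γ₀ : Type*} [Field K] [LinearOrderedCommGroupWithZero Γ₀]
    (v : Valuation K Γ₀) : TopologicalSpace (OnePoint K) :=
  TopologicalSpace.generateFrom
    ({S | ∃ p ρ, ρ ≠ 0 ∧ S = OnePoint.some '' {y : K | v (y - p) ≤ ρ}} ∪
     {S | ∃ p ρ, ρ ≠ 0 ∧
        S = insert OnePoint.infty (OnePoint.some '' {y : K | ρ ≤ v (y - p)})})

open Filter Set Topology TopologicalSpace OnePoint

theorem stmt_9 {K Γ₀ : Type*} [Field K] [LinearOrderedCommGroupWithZero Γ₀]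
    (v : Valuation K Γ₀) (hnt : ∃ x : K, v x ≠ 0 ∧ v x ≠ 1)
    (q p : K) (hq0 : q ≠ 0) (hp : p ≠ 0) (hq : IsTopNilpotent (v q)) :
    @closure _ (pTop v) {x : OnePoint K | ∃ n : ℤ, x = OnePoint.some (q ^ n * p)} =
      {x : OnePoint K | ∃ n : ℤ, x = OnePoint.some (q ^ n * p)} ∪
        {OnePoint.some (0 : K), OnePoint.infty} ∧
    @IsCompact _ (pTop v)
      (@closure _ (pTop v) {x : OnePoint K | ∃ n : ℤ, x = OnePoint.some (q ^ n * p)}) := by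
  classical
  letI : TopologicalSpace (OnePoint K) := pTop v
  set S : Set (OnePoint K) := {x : OnePoint K | ∃ n : ℤ, x = OnePoint.some (q ^ n * p)}
    with hSdef
  -- basic value facts
  have hvq0 : v q ≠ 0 := by simpa [Valuation.zero_iff] using hq0
  have hvp0 : v p ≠ 0 := by simpa [Valuation.zero_iff] using hp
  have hvqpos : 0 < v q := zero_lt_iff.mpr hvq0
  have hvppos : 0 < v p := zero_lt_iff.mpr hvp0
  have hvq1 : v q < 1 := by
    by_contra hle
    push_neg at hle
    obtain ⟨x, hx0, hx1⟩ := hnt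
    have hxpos : 0 < v x := zero_lt_iff.mpr hx0
    have hε0 : min (v x) (v x)⁻¹ ≠ 0 :=
      (lt_min hxpos (zero_lt_iff.mpr (inv_ne_zero hx0))).ne'
    have hε1 : min (v x) (v x)⁻¹ < 1 := by
      rcases lt_or_gt_of_ne hx1 with h | h
      · exact (min_le_left _ _).trans_lt h
      · exact (min_le_right _ _).trans_lt ((inv_lt_one₀ hxpos).mpr h)
    obtain ⟨n₀, hn₀⟩ := hq _ hε0
    exact absurd (hn₀ n₀ le_rfl) (not_le.mpr (hε1.trans_le (one_le_pow₀ hle)))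
  -- values of orbit points
  have hw : ∀ n : ℤ, v (q ^ n * p) = (v q) ^ n * v p := by
    intro n
    rw [map_mul, map_zpow₀]
  have hw0 : ∀ n : ℤ, v (q ^ n * p) ≠ 0 := fun n => by
    rw [hw]; exact mul_ne_zero (zpow_ne_zero n hvq0) hvp0
  have hwanti : StrictAnti (fun n : ℤ => v (q ^ n * p)) := by
    intro m n hmn
    simp only [hw]
    exact mul_lt_mul_of_pos_right (zpow_right_strictAnti₀ hvqpos hvq1 hmn) hvppos
  -- eventual smallness
  have hsmall : ∀ ε : Γ₀, ε ≠ 0 → ∃ n₀ : ℤ, ∀ n : ℤ, n₀ ≤ n → v (q ^ n * p) ≤ ε := by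
    intro ε hε
    obtain ⟨N, hN⟩ := hq (ε * (v p)⁻¹) (mul_ne_zero hε (inv_ne_zero hvp0))
    refine ⟨(N : ℤ), fun n hn => ?_⟩
    have h1 : v (q ^ n * p) ≤ v (q ^ (N : ℤ) * p) := hwanti.antitone hn
    refine h1.trans ?_
    rw [hw, zpow_natCast]
    calc (v q) ^ N * v p ≤ ε * (v p)⁻¹ * v p :=
          mul_le_mul_left (hN N le_rfl) (v p)
      _ = ε := inv_mul_cancel_right₀ hvp0 ε
  -- eventual bigness
  have hbig : ∀ ε : Γ₀, ε ≠ 0 → ∃ n₀ : ℤ, ∀ n : ℤ, n ≤ n₀ → ε ≤ v (q ^ n * p) := by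
    intro ε hε
    obtain ⟨N, hN⟩ := hq (v p * ε⁻¹) (mul_ne_zero hvp0 (inv_ne_zero hε))
    refine ⟨-(N : ℤ), fun n hn => ?_⟩
    have h1 : v (q ^ (-(N : ℤ)) * p) ≤ v (q ^ n * p) := hwanti.antitone hn
    refine le_trans ?_ h1
    rw [hw, zpow_neg, zpow_natCast]
    have h2 : (v p * ε⁻¹)⁻¹ ≤ ((v q) ^ N)⁻¹ :=
      (inv_le_inv₀ (zero_lt_iff.mpr (mul_ne_zero hvp0 (inv_ne_zero hε)))
        (pow_pos hvqpos N)).mpr (hN N le_rfl)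
    have h3 : (v p * ε⁻¹)⁻¹ * v p = ε := by
      rw [mul_inv, inv_inv, mul_comm (v p)⁻¹ ε, inv_mul_cancel_right₀ hvp0]
    calc ε = (v p * ε⁻¹)⁻¹ * v p := h3.symm
      _ ≤ ((v q) ^ N)⁻¹ * v p := mul_le_mul_left h2 (v p)
  -- separation of points outside the closure
  have hsep : ∀ a : K, a ≠ 0 → (∀ n : ℤ, a ≠ q ^ n * p) →
      ∃ ρ : Γ₀, ρ ≠ 0 ∧ ρ < v a ∧ ∀ n : ℤ, ¬ v (q ^ n * p - a) ≤ ρ := by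
    intro a ha0 han
    have hva0 : 0 < v a := zero_lt_iff.mpr (by simpa [Valuation.zero_iff] using ha0)
    obtain ⟨nsm, hnsm⟩ := hsmall (v q * v a) (mul_ne_zero hvq0 hva0.ne')
    obtain ⟨nbg, hnbg⟩ := hbig (v a) hva0.ne'
    have hTne : ∃ n : ℤ, v (q ^ n * p) < v a :=
      ⟨nsm, (hnsm nsm le_rfl).trans_lt (mul_lt_of_lt_one_left hva0 hvq1)⟩
    have hTbd : ∀ z : ℤ, v (q ^ z * p) < v a → nbg + 1 ≤ z := by
      intro z hz
      by_contra h
      push_neg at h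
      exact absurd (hnbg z (by omega)) (not_le.mpr hz)
    obtain ⟨n₀, hn₀T, hn₀min⟩ := Int.exists_least_of_bdd ⟨nbg + 1, hTbd⟩ hTne
    have hge : ∀ n : ℤ, n < n₀ → v a ≤ v (q ^ n * p) := by
      intro n hn
      by_contra h
      push_neg at h
      exact absurd (hn₀min n h) (by omega)
    have hval : ∀ n : ℤ, v (q ^ n * p - a) < v a → v (q ^ n * p) = v a :=
      fun n h => v.map_eq_of_sub_lt h
    by_cases hcase : v (q ^ (n₀ - 1) * p) = v a
    · -- a has the same value as the orbit point with exponent n₀ - 1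
      have hne : q ^ (n₀ - 1) * p - a ≠ 0 := sub_ne_zero.mpr fun h => han (n₀ - 1) h.symm
      have hδ0 : 0 < v (q ^ (n₀ - 1) * p - a) :=
        zero_lt_iff.mpr (by simpa [Valuation.zero_iff] using hne)
      have hδle : v (q ^ (n₀ - 1) * p - a) ≤ v a := by
        refine (v.map_sub _ _).trans ?_
        rw [hcase, max_self]
      have hρlt : v q * v (q ^ (n₀ - 1) * p - a) < v (q ^ (n₀ - 1) * p - a) :=
        mul_lt_of_lt_one_left hδ0 hvq1
      refine ⟨v q * v (q ^ (n₀ - 1) * p - a), mul_ne_zero hvq0 hδ0.ne',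
        hρlt.trans_le hδle, ?_⟩
      intro n hn
      have hlt : v (q ^ n * p - a) < v a := (hn.trans_lt hρlt).trans_le hδle
      have heq : n = n₀ - 1 := hwanti.injective ((hval n hlt).trans hcase.symm)
      rw [heq] at hn
      exact absurd hn (not_le.mpr hρlt)
    · -- no orbit point has the value of a
      refine ⟨v (q ^ n₀ * p), hw0 n₀, hn₀T, ?_⟩
      intro n hn
      have hlt : v (q ^ n * p - a) < v a := hn.trans_lt hn₀T
      have heq := hval n hlt
      have hnlt : n < n₀ := by
        have h1 : v (q ^ n₀ * p) < v (q ^ n * p) := by rw [heq]; exact hn₀T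
        exact hwanti.lt_iff_gt.mp h1
      have h1 : v a ≤ v (q ^ (n₀ - 1) * p) := hge _ (by omega)
      have h2 : v (q ^ (n₀ - 1) * p) ≤ v (q ^ n * p) := hwanti.antitone (by omega)
      exact hcase (le_antisymm (h2.trans_eq heq) h1)
  -- the candidate closure is closed
  have hclosed : IsClosed (S ∪ {OnePoint.some (0 : K), OnePoint.infty}) := by
    rw [← isOpen_compl_iff, isOpen_iff_forall_mem_open]
    intro x hx
    simp only [mem_compl_iff, mem_union, mem_insert_iff, mem_singleton_iff, not_or,
      hSdef, mem_setOf_eq] at hx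
    obtain ⟨hxS, hx0, hxinf⟩ := hx
    induction x using OnePoint.rec with
    | infty => exact absurd rfl hxinf
    | coe a =>
      have ha0 : a ≠ 0 := fun h => hx0 (by rw [h])
      have han : ∀ n : ℤ, a ≠ q ^ n * p := fun n h => hxS ⟨n, by rw [h]⟩
      obtain ⟨ρ, hρ0, hρlt, hρ⟩ := hsep a ha0 han
      refine ⟨OnePoint.some '' {y : K | v (y - a) ≤ ρ}, ?_, ?_, ?_⟩
      · rintro z ⟨y, hy, rfl⟩
        simp only [mem_compl_iff, mem_union, mem_insert_iff, mem_singleton_iff, not_or,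
          hSdef, mem_setOf_eq]
        refine ⟨?_, ?_, ?_⟩
        · rintro ⟨n, hn⟩
          have : y = q ^ n * p := by
            have := OnePoint.coe_injective hn
            exact this
          rw [this] at hy
          exact hρ n hy
        · intro h
          have hy0 : y = 0 := OnePoint.coe_injective h
          rw [hy0] at hy
          have hy' : v ((0 : K) - a) ≤ ρ := hy
          rw [zero_sub, Valuation.map_neg] at hy'
          exact absurd hy' (not_le.mpr hρlt)
        · exact OnePoint.coe_ne_infty y
      · exact isOpen_generateFrom_of_mem (Or.inl ⟨a, ρ, hρ0, rfl⟩)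
      · exact ⟨a, by simp, rfl⟩
  -- the two limits
  have hlim0 : Tendsto (fun n : ℕ => (OnePoint.some (q ^ (n : ℤ) * p) : OnePoint K))
      atTop (𝓝 (OnePoint.some (0 : K))) := by
    apply tendsto_nhds_generateFrom_iff.mpr
    rintro s (⟨p₀, ρ, hρ, rfl⟩ | ⟨p₀, ρ, hρ, rfl⟩) hs
    · obtain ⟨y, hy, hy0⟩ := hs
      have : y = 0 := OnePoint.coe_injective hy0
      rw [this] at hy
      have hp₀ : v p₀ ≤ ρ := by
        have hy' : v ((0 : K) - p₀) ≤ ρ := hy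
        rwa [zero_sub, Valuation.map_neg] at hy'
      obtain ⟨n₀, hn₀⟩ := hsmall ρ hρ
      filter_upwards [eventually_ge_atTop n₀.toNat] with n hn
      refine ⟨q ^ (n : ℤ) * p, ?_, rfl⟩
      have hn' : n₀ ≤ (n : ℤ) := le_trans (Int.self_le_toNat n₀) (by exact_mod_cast hn)
      exact (v.map_sub _ _).trans (max_le (hn₀ _ hn') hp₀)
    · rcases hs with hs | ⟨y, hy, hy0⟩
      · exact absurd hs (OnePoint.coe_ne_infty (0 : K))
      · have : y = 0 := OnePoint.coe_injective hy0
        rw [this] at hy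
        have hp₀ : ρ ≤ v p₀ := by
          have hy' : ρ ≤ v ((0 : K) - p₀) := hy
          rwa [zero_sub, Valuation.map_neg] at hy'
        have hvp₀0 : v p₀ ≠ 0 := fun h => hρ (le_antisymm (h ▸ hp₀) zero_le')
        obtain ⟨n₀, hn₀⟩ := hsmall (v q * v p₀) (mul_ne_zero hvq0 hvp₀0)
        filter_upwards [eventually_ge_atTop n₀.toNat] with n hn
        have hn' : n₀ ≤ (n : ℤ) := le_trans (Int.self_le_toNat n₀) (by exact_mod_cast hn)
        refine Or.inr ⟨q ^ (n : ℤ) * p, ?_, rfl⟩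
        have hlt : v (q ^ (n : ℤ) * p) < v p₀ :=
          (hn₀ _ hn').trans_lt (mul_lt_of_lt_one_left (zero_lt_iff.mpr hvp₀0) hvq1)
        show ρ ≤ v (q ^ (n : ℤ) * p - p₀)
        rw [v.map_sub_eq_of_lt_right hlt]
        exact hp₀
  have hliminf : Tendsto (fun n : ℕ => (OnePoint.some (q ^ (-(n : ℤ)) * p) : OnePoint K))
      atTop (𝓝 (OnePoint.infty : OnePoint K)) := by
    apply tendsto_nhds_generateFrom_iff.mpr
    rintro s (⟨p₀, ρ, hρ, rfl⟩ | ⟨p₀, ρ, hρ, rfl⟩) hs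
    · obtain ⟨y, _, hy0⟩ := hs
      exact absurd hy0 (OnePoint.coe_ne_infty y)
    · have hmaxpos : 0 < max ρ (v p₀) := (zero_lt_iff.mpr hρ).trans_le (le_max_left _ _)
      obtain ⟨n₀, hn₀⟩ := hbig ((v q)⁻¹ * max ρ (v p₀))
        (mul_ne_zero (inv_ne_zero hvq0) hmaxpos.ne')
      filter_upwards [eventually_ge_atTop (-n₀).toNat] with n hn
      have hn' : -(n : ℤ) ≤ n₀ := by
        have h1 : (-n₀ : ℤ) ≤ ((-n₀).toNat : ℤ) := Int.self_le_toNat _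
        have h2 : ((-n₀).toNat : ℤ) ≤ (n : ℤ) := by exact_mod_cast hn
        omega
      have h1 : (v q)⁻¹ * max ρ (v p₀) ≤ v (q ^ (-(n : ℤ)) * p) := hn₀ _ hn'
      have h2 : max ρ (v p₀) < (v q)⁻¹ * max ρ (v p₀) :=
        lt_mul_of_one_lt_left hmaxpos ((one_lt_inv₀ hvqpos).mpr hvq1)
      refine Or.inr ⟨q ^ (-(n : ℤ)) * p, ?_, rfl⟩
      show ρ ≤ v (q ^ (-(n : ℤ)) * p - p₀)
      have h3 : v p₀ < v (q ^ (-(n : ℤ)) * p) :=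
        ((le_max_right _ _).trans_lt h2).trans_le h1
      rw [v.map_sub_eq_of_lt_left h3]
      exact ((le_max_left _ _).trans_lt h2).le.trans h1
  -- closure equality
  have hmemS0 : ∀ᶠ n : ℕ in atTop,
      (OnePoint.some (q ^ (n : ℤ) * p) : OnePoint K) ∈ S :=
    Eventually.of_forall fun n => ⟨(n : ℤ), rfl⟩
  have hmemSinf : ∀ᶠ n : ℕ in atTop,
      (OnePoint.some (q ^ (-(n : ℤ)) * p) : OnePoint K) ∈ S :=
    Eventually.of_forall fun n => ⟨-(n : ℤ), rfl⟩
  have hcl : closure S = S ∪ {OnePoint.some (0 : K), OnePoint.infty} := by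
    refine Subset.antisymm (closure_minimal subset_union_left hclosed) ?_
    rintro x (hx | hx)
    · exact subset_closure hx
    · rcases hx with rfl | rfl
      · exact mem_closure_of_tendsto hlim0 hmemS0
      · exact mem_closure_of_tendsto hliminf hmemSinf
  refine ⟨hcl, ?_⟩
  -- compactness
  have hA : IsCompact (insert (OnePoint.some (0 : K))
      (range fun n : ℕ => (OnePoint.some (q ^ (n : ℤ) * p) : OnePoint K))) :=
    hlim0.isCompact_insert_range
  have hB : IsCompact (insert (OnePoint.infty : OnePoint K)
      (range fun n : ℕ => (OnePoint.some (q ^ (-(n : ℤ)) * p) : OnePoint K))) :=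
    hliminf.isCompact_insert_range
  refine (hA.union hB).of_isClosed_subset (hcl ▸ hclosed) ?_
  rw [hcl]
  rintro x (⟨n, rfl⟩ | hx)
  · rcases le_or_gt 0 n with h | h
    · refine Or.inl (Or.inr ⟨n.toNat, ?_⟩)
      simp [Int.toNat_of_nonneg h]
    · refine Or.inr (Or.inr ⟨(-n).toNat, ?_⟩)
      simp [Int.toNat_of_nonneg (by omega : (0 : ℤ) ≤ -n)]
  · rcases hx with rfl | rfl
    · exact Or.inl (mem_insert _ _)
    · exact Or.inr (mem_insert _ _)
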